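/- Let k ∈ {0,1,2} and let ρ : ℝ → ℝ be k-times continuously differentiable on ℝ and three times continuously differentiable in a neighborhood of some x₀ ∈ ℝ with ρ'(x₀) ≠ 0. Then for every B > 0 and every d ∈ ℕ there exists a constant C = C(B, ρ) > 0 such that for every L ∈ ℕ with L ≥ 2 and every ε ∈ (0,1) there is a neural network Φ with d-dimensional input and d-dimensional output satisfying: (i) for each component i = 1,…,d and each multi-index α with |α| ≤ k, sup_{x∈[−B,B]^d} |D^α([R_ρ(Φ)]_i − x_i)(x)| ≤ ε; (ii) max_i ‖[R_ρ(Φ)]_i‖_{W^{k,∞}([−B,B]^d)} ≤ C·max{1, B}; (iii) Φ has exactly L layers and M(Φ) ≤ 4dL − 3d; (iv) ‖Φ‖_max ≤ C·L·ε^{−1}. -/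

import Mathlib

open scoped BigOperators

/-- A feedforward neural network with input dimension `d` and `depth + 1` affine layers
(`A ℓ`, `b ℓ` for `ℓ = 0, …, depth`); the entries for `ℓ > depth` are irrelevant. -/
structure NeuralNetwork (d : ℕ) where
  depth : ℕ
  dims : ℕ → ℕ
  dims0 : dims 0 = d
  A : (ℓ : ℕ) → Matrix (Fin (dims (ℓ + 1))) (Fin (dims ℓ)) ℝ
  b : (ℓ : ℕ) → Fin (dims (ℓ + 1)) → ℝ

namespace NeuralNetwork

variable {d : ℕ}

/-- Hidden activations: `hidden ρ Φ x ℓ` is the output of layer `ℓ` (with activation). -/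
noncomputable def hidden (ρ : ℝ → ℝ) (Φ : NeuralNetwork d) (x : Fin d → ℝ) :
    (ℓ : ℕ) → Fin (Φ.dims ℓ) → ℝ
  | 0 => fun i => x (Fin.cast Φ.dims0 i)
  | ℓ + 1 => fun i => ρ ((Φ.A ℓ).mulVec (hidden ρ Φ x ℓ) i + Φ.b ℓ i)

/-- The realization `R_ρ(Φ)`: the last layer is affine (no activation). -/
noncomputable def realize (ρ : ℝ → ℝ) (Φ : NeuralNetwork d) (x : Fin d → ℝ) :
    Fin (Φ.dims (Φ.depth + 1)) → ℝ :=
  fun i => (Φ.A Φ.depth).mulVec (hidden ρ Φ x Φ.depth) i + Φ.b Φ.depth i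

/-- The realization of a network with one-dimensional output, as a scalar function. -/
noncomputable def realizeScalar (ρ : ℝ → ℝ) (Φ : NeuralNetwork d)
    (h : Φ.dims (Φ.depth + 1) = 1) (x : Fin d → ℝ) : ℝ :=
  Φ.realize ρ x (Fin.cast h.symm 0)

/-- Number of nonzero weights `M(Φ)`. -/
noncomputable def numWeights (Φ : NeuralNetwork d) : ℕ :=
  ∑ ℓ ∈ Finset.range (Φ.depth + 1),
    ((Finset.univ.filter fun p : Fin (Φ.dims (ℓ + 1)) × Fin (Φ.dims ℓ) =>
        Φ.A ℓ p.1 p.2 ≠ 0).card +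
      (Finset.univ.filter fun i : Fin (Φ.dims (ℓ + 1)) => Φ.b ℓ i ≠ 0).card)

/-- Maximum absolute value of all weights, `‖Φ‖_max`. -/
noncomputable def maxWeight (Φ : NeuralNetwork d) : ℝ :=
  sSup {r : ℝ | ∃ ℓ < Φ.depth + 1,
    (∃ i j, r = |Φ.A ℓ i j|) ∨ (∃ i, r = |Φ.b ℓ i|)}

/-- All nonzero weights of `Φ` lie in the set `S`. -/
def weightsIn (Φ : NeuralNetwork d) (S : Set ℝ) : Prop :=
  ∀ ℓ < Φ.depth + 1,
    (∀ i j, Φ.A ℓ i j ≠ 0 → Φ.A ℓ i j ∈ S) ∧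
    (∀ i, Φ.b ℓ i ≠ 0 → Φ.b ℓ i ∈ S)

end NeuralNetwork

/-- Iterated partial derivative `D^α` in the directions listed in `u` (a multi-index `α`
with `|α| = u.length`). -/
noncomputable def multiDeriv {d : ℕ} : List (Fin d) → ((Fin d → ℝ) → ℝ) → ((Fin d → ℝ) → ℝ)
  | [], f => f
  | i :: u, f => fun x => fderiv ℝ (multiDeriv u f) x (Pi.single i 1)

/-- The open unit cube `(0,1)^d`. -/
def unitCube (d : ℕ) : Set (Fin d → ℝ) := {x | ∀ i, x i ∈ Set.Ioo (0 : ℝ) 1}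

/-! ### Auxiliary lemmas -/

section MultiDerivAux

lemma fderiv_comp_eval {d : ℕ} (H : ℝ → ℝ) (hH : Differentiable ℝ H) (i j : Fin d)
    (x : Fin d → ℝ) :
    fderiv ℝ (fun y : Fin d → ℝ => H (y i)) x (Pi.single j 1) =
      if j = i then deriv H (x i) else 0 := by
  have hproj : HasFDerivAt (fun y : Fin d → ℝ => y i)
      (ContinuousLinearMap.proj i : (Fin d → ℝ) →L[ℝ] ℝ) x :=
    (ContinuousLinearMap.proj i : (Fin d → ℝ) →L[ℝ] ℝ).hasFDerivAt
  have h1 : HasFDerivAt (fun y : Fin d → ℝ => H (y i))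
      ((deriv H (x i)) • (ContinuousLinearMap.proj i : (Fin d → ℝ) →L[ℝ] ℝ)) x :=
    ((hH (x i)).hasDerivAt).comp_hasFDerivAt x hproj
  rw [h1.fderiv]
  simp only [ContinuousLinearMap.coe_smul', Pi.smul_apply, ContinuousLinearMap.proj_apply,
    Pi.single_apply, smul_eq_mul]
  by_cases h : j = i
  · simp [h]
  · simp only [if_neg h, if_neg (fun hc : i = j => h hc.symm), mul_zero]

lemma multiDeriv_comp_eval {d n : ℕ} (h : ℝ → ℝ) (hh : ContDiff ℝ (n : ℕ) h)
    (i : Fin d) (u : List (Fin d)) (hu : u.length ≤ n) :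
    multiDeriv u (fun y => h (y i)) =
      fun x => if ∀ j ∈ u, j = i then iteratedDeriv u.length h (x i) else 0 := by
  induction u with
  | nil => funext x; simp [multiDeriv]
  | cons j u ih =>
    have hu' : u.length ≤ n := Nat.le_of_succ_le (by simpa using hu)
    funext x
    show fderiv ℝ (multiDeriv u fun y => h (y i)) x (Pi.single j 1) = _
    rw [ih hu']
    by_cases hall : ∀ j' ∈ u, j' = i
    · simp only [if_pos hall]
      have hdiff : Differentiable ℝ (iteratedDeriv u.length h) :=
        hh.differentiable_iteratedDeriv u.length
          (by exact_mod_cast Nat.lt_of_succ_le (by simpa using hu))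
      rw [fderiv_comp_eval _ hdiff]
      by_cases hji : j = i
      · simp [hji, hall, List.length_cons, iteratedDeriv_succ, List.forall_mem_cons,
          if_pos hall]
      · simp [hji, List.forall_mem_cons]
    · have : (fun x : Fin d → ℝ =>
          if ∀ j ∈ u, j = i then iteratedDeriv u.length h (x i) else 0)
          = fun _ => (0 : ℝ) := by funext y; rw [if_neg hall]
      rw [this]
      have hcond : ¬ ∀ j' ∈ j :: u, j' = i := by
        intro hc; exact hall fun j' hj' => hc j' (List.mem_cons_of_mem _ hj')
      rw [if_neg hcond]
      simp [fderiv_const]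

end MultiDerivAux

noncomputable section ScalarAux

/-- `n`-fold iterate of `φ`. -/
def gIter (φ : ℝ → ℝ) : ℕ → ℝ → ℝ
  | 0 => id
  | n + 1 => φ ∘ gIter φ n

/-- Formal first derivative of `gIter`. -/
def GdIter (φ φd : ℝ → ℝ) : ℕ → ℝ → ℝ
  | 0 => fun _ => 1
  | n + 1 => fun y => φd (gIter φ n y) * GdIter φ φd n y

/-- Formal second derivative of `gIter`. -/
def GddIter (φ φd φdd : ℝ → ℝ) : ℕ → ℝ → ℝ
  | 0 => fun _ => 0
  | n + 1 => fun y =>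
      φdd (gIter φ n y) * GdIter φ φd n y * GdIter φ φd n y
        + φd (gIter φ n y) * GddIter φ φd φdd n y

variable {φ φd φdd : ℝ → ℝ} {B s : ℝ} {N : ℕ}

lemma gIter_bound0 (hB : 0 ≤ B) (hs : 0 ≤ s) (hsmall : (N : ℝ) * s ≤ 1)
    (hφ : ∀ z, |z| ≤ B + 1 → |φ z - z| ≤ s) :
    ∀ n ≤ N, ∀ y : ℝ, |y| ≤ B → |gIter φ n y - y| ≤ n * s := by
  intro n hn
  induction n with
  | zero => intro y hy; simp [gIter]
  | succ n ih =>
    intro y hy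
    have hn' : n ≤ N := Nat.le_of_succ_le hn
    have h1 : |gIter φ n y - y| ≤ n * s := ih hn' y hy
    have hns : (n : ℝ) * s ≤ 1 := by
      calc (n : ℝ) * s ≤ N * s := by
            apply mul_le_mul_of_nonneg_right _ hs; exact_mod_cast hn'
        _ ≤ 1 := hsmall
    have hrange : |gIter φ n y| ≤ B + 1 := by
      calc |gIter φ n y| = |(gIter φ n y - y) + y| := by ring_nf
        _ ≤ |gIter φ n y - y| + |y| := abs_add_le _ _
        _ ≤ n * s + B := by linarith
        _ ≤ B + 1 := by linarith
    have h2 : |φ (gIter φ n y) - gIter φ n y| ≤ s := hφ _ hrange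
    have : gIter φ (n+1) y = φ (gIter φ n y) := rfl
    rw [this]
    calc |φ (gIter φ n y) - y|
        = |(φ (gIter φ n y) - gIter φ n y) + (gIter φ n y - y)| := by ring_nf
      _ ≤ |φ (gIter φ n y) - gIter φ n y| + |gIter φ n y - y| := abs_add_le _ _
      _ ≤ s + n * s := by linarith
      _ = (n + 1 : ℕ) * s := by push_cast; ring

lemma gIter_range (hB : 0 ≤ B) (hs : 0 ≤ s) (hsmall : (N : ℝ) * s ≤ 1)
    (hφ : ∀ z, |z| ≤ B + 1 → |φ z - z| ≤ s) :
    ∀ n ≤ N, ∀ y : ℝ, |y| ≤ B → |gIter φ n y| ≤ B + 1 := by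
  intro n hn y hy
  have h1 := gIter_bound0 hB hs hsmall hφ n hn y hy
  have hns : (n : ℝ) * s ≤ 1 := by
    calc (n : ℝ) * s ≤ N * s := by
          apply mul_le_mul_of_nonneg_right _ hs; exact_mod_cast hn
      _ ≤ 1 := hsmall
  calc |gIter φ n y| = |(gIter φ n y - y) + y| := by ring_nf
    _ ≤ |gIter φ n y - y| + |y| := abs_add_le _ _
    _ ≤ B + 1 := by linarith

lemma GdIter_bound (hB : 0 ≤ B) (hs : 0 ≤ s) (hsmall : (N : ℝ) * s ≤ 1/30)
    (hφ : ∀ z, |z| ≤ B + 1 → |φ z - z| ≤ s)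
    (hφd : ∀ z, |z| ≤ B + 1 → |φd z - 1| ≤ s) :
    ∀ n ≤ N, ∀ y : ℝ, |y| ≤ B → |GdIter φ φd n y - 1| ≤ 3 * n * s := by
  have hsmall1 : (N : ℝ) * s ≤ 1 := by linarith
  intro n hn
  induction n with
  | zero => intro y hy; simp [GdIter]
  | succ n ih =>
    intro y hy
    have hn' : n ≤ N := Nat.le_of_succ_le hn
    have h1 : |GdIter φ φd n y - 1| ≤ 3 * n * s := ih hn' y hy
    have hns : (n : ℝ) * s ≤ 1/30 := by
      calc (n : ℝ) * s ≤ N * s := by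
            apply mul_le_mul_of_nonneg_right _ hs; exact_mod_cast hn'
        _ ≤ 1/30 := hsmall
    have hrange := gIter_range hB hs hsmall1 hφ n hn' y hy
    have h2 : |φd (gIter φ n y) - 1| ≤ s := hφd _ hrange
    have hGd : |GdIter φ φd n y| ≤ 1 + 3 * n * s := by
      calc |GdIter φ φd n y| = |(GdIter φ φd n y - 1) + 1| := by ring_nf
        _ ≤ |GdIter φ φd n y - 1| + 1 := by
            refine le_trans (abs_add_le _ _) ?_; simp
        _ ≤ 1 + 3 * n * s := by linarith
    have : GdIter φ φd (n+1) y = φd (gIter φ n y) * GdIter φ φd n y := rfl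
    rw [this]
    have key : |φd (gIter φ n y) * GdIter φ φd n y - 1|
        ≤ |φd (gIter φ n y) - 1| * |GdIter φ φd n y| + |GdIter φ φd n y - 1| := by
      calc |φd (gIter φ n y) * GdIter φ φd n y - 1|
          = |(φd (gIter φ n y) - 1) * GdIter φ φd n y + (GdIter φ φd n y - 1)| := by ring_nf
        _ ≤ |(φd (gIter φ n y) - 1) * GdIter φ φd n y| + |GdIter φ φd n y - 1| := abs_add_le _ _
        _ = |φd (gIter φ n y) - 1| * |GdIter φ φd n y| + |GdIter φ φd n y - 1| := by
            rw [abs_mul]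
    refine key.trans ?_
    have habs : (0:ℝ) ≤ |GdIter φ φd n y| := abs_nonneg _
    push_cast
    nlinarith [abs_nonneg (φd (gIter φ n y) - 1),
      mul_le_mul_of_nonneg_right h2 habs]

lemma GddIter_bound (hB : 0 ≤ B) (hs : 0 ≤ s) (hsmall : (N : ℝ) * s ≤ 1/30)
    (hφ : ∀ z, |z| ≤ B + 1 → |φ z - z| ≤ s)
    (hφd : ∀ z, |z| ≤ B + 1 → |φd z - 1| ≤ s)
    (hφdd : ∀ z, |z| ≤ B + 1 → |φdd z| ≤ s) :
    ∀ n ≤ N, ∀ y : ℝ, |y| ≤ B → |GddIter φ φd φdd n y| ≤ 12 * n * s := by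
  have hsmall1 : (N : ℝ) * s ≤ 1 := by linarith
  intro n hn
  induction n with
  | zero => intro y hy; simp [GddIter]
  | succ n ih =>
    intro y hy
    have hn' : n ≤ N := Nat.le_of_succ_le hn
    have h1 : |GddIter φ φd φdd n y| ≤ 12 * n * s := ih hn' y hy
    have hns : (n : ℝ) * s ≤ 1/30 := by
      calc (n : ℝ) * s ≤ N * s := by
            apply mul_le_mul_of_nonneg_right _ hs; exact_mod_cast hn'
        _ ≤ 1/30 := hsmall
    have hrange := gIter_range hB hs hsmall1 hφ n hn' y hy
    have h2 : |φd (gIter φ n y) - 1| ≤ s := hφd _ hrange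
    have h3 : |φdd (gIter φ n y)| ≤ s := hφdd _ hrange
    have hGd1 : |GdIter φ φd n y - 1| ≤ 3 * n * s :=
      GdIter_bound hB hs hsmall hφ hφd n hn' y hy
    have hGd : |GdIter φ φd n y| ≤ 11/10 := by
      calc |GdIter φ φd n y| = |(GdIter φ φd n y - 1) + 1| := by ring_nf
        _ ≤ |GdIter φ φd n y - 1| + 1 := by
            refine le_trans (abs_add_le _ _) ?_; simp
        _ ≤ 11/10 := by nlinarith
    have hφdabs : |φd (gIter φ n y)| ≤ 1 + s := by
      calc |φd (gIter φ n y)| = |(φd (gIter φ n y) - 1) + 1| := by ring_nf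
        _ ≤ |φd (gIter φ n y) - 1| + 1 := by
            refine le_trans (abs_add_le _ _) ?_; simp
        _ ≤ 1 + s := by linarith
    have hsle : s ≤ 1/30 := by
      have h1N : (1:ℝ) ≤ (N:ℝ) := by
        have : 1 ≤ N := le_trans (Nat.succ_le_succ (Nat.zero_le n)) hn
        exact_mod_cast this
      nlinarith
    have : GddIter φ φd φdd (n+1) y
        = φdd (gIter φ n y) * GdIter φ φd n y * GdIter φ φd n y
          + φd (gIter φ n y) * GddIter φ φd φdd n y := rfl
    rw [this]
    calc |φdd (gIter φ n y) * GdIter φ φd n y * GdIter φ φd n y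
          + φd (gIter φ n y) * GddIter φ φd φdd n y|
        ≤ |φdd (gIter φ n y)| * |GdIter φ φd n y| * |GdIter φ φd n y|
          + |φd (gIter φ n y)| * |GddIter φ φd φdd n y| := by
          refine le_trans (abs_add_le _ _) ?_
          rw [abs_mul, abs_mul, abs_mul]
      _ ≤ s * (11/10) * (11/10) + (1 + s) * (12 * n * s) := by
          have e1 : |φdd (gIter φ n y)| * |GdIter φ φd n y| * |GdIter φ φd n y|
              ≤ s * (11/10) * (11/10) := by
            apply mul_le_mul _ hGd (abs_nonneg _) (by positivity)
            exact mul_le_mul h3 hGd (abs_nonneg _) hs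
          have e2 : |φd (gIter φ n y)| * |GddIter φ φd φdd n y| ≤ (1 + s) * (12 * n * s) :=
            mul_le_mul hφdabs h1 (abs_nonneg _) (by linarith)
          linarith
      _ ≤ 12 * (n + 1 : ℕ) * s := by
          push_cast
          nlinarith [mul_le_mul_of_nonneg_left hns hs, hs, hsle, (Nat.cast_nonneg n : (0:ℝ) ≤ n)]

end ScalarAux

noncomputable section PhiAux

open Set Metric

variable (ρ : ℝ → ℝ) (x₀ δ c : ℝ)

def phiF : ℝ → ℝ := fun y => (ρ (x₀ + δ * y) - ρ x₀) / (δ * c)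
def phiDF : ℝ → ℝ := fun y => deriv ρ (x₀ + δ * y) / c
def phiDDF : ℝ → ℝ := fun y => δ * deriv (deriv ρ) (x₀ + δ * y) / c

variable {ρ x₀ δ c}

lemma hasDerivAt_affine (y : ℝ) : HasDerivAt (fun y : ℝ => x₀ + δ * y) δ y := by
  simpa using ((hasDerivAt_id y).const_mul δ).const_add x₀

lemma hasDerivAt_phiF (hρ : Differentiable ℝ ρ) (hδ : δ ≠ 0) (y : ℝ) :
    HasDerivAt (phiF ρ x₀ δ c) (phiDF ρ x₀ δ c y) y := by
  have h1 : HasDerivAt (fun y : ℝ => ρ (x₀ + δ * y)) (deriv ρ (x₀ + δ * y) * δ) y :=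
    ((hρ _).hasDerivAt).comp y (hasDerivAt_affine y)
  have h2 := (h1.sub_const (ρ x₀)).div_const (δ * c)
  refine HasDerivAt.congr_deriv h2 ?_
  unfold phiDF
  rw [mul_comm δ c, mul_div_mul_right _ _ hδ]

lemma hasDerivAt_phiDF (hρ : ContDiff ℝ 2 ρ) (hδ : δ ≠ 0) (y : ℝ) :
    HasDerivAt (phiDF ρ x₀ δ c) (phiDDF ρ x₀ δ c y) y := by
  have hd : Differentiable ℝ (deriv ρ) := by
    have := hρ.differentiable_iteratedDeriv 1 (by norm_num)
    simpa [iteratedDeriv_one] using this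
  have h1 : HasDerivAt (fun y : ℝ => deriv ρ (x₀ + δ * y)) (deriv (deriv ρ) (x₀ + δ * y) * δ) y :=
    ((hd _).hasDerivAt).comp y (hasDerivAt_affine y)
  have h2 := h1.div_const c
  refine HasDerivAt.congr_deriv h2 ?_
  unfold phiDDF
  ring

lemma contDiff_phiF {k : ℕ} (hρ : ContDiff ℝ (k : ℕ) ρ) :
    ContDiff ℝ (k : ℕ) (phiF ρ x₀ δ c) := by
  unfold phiF
  have haf : ContDiff ℝ (k : ℕ) (fun y : ℝ => x₀ + δ * y) :=
    contDiff_const.add (contDiff_const.mul contDiff_id)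
  exact ((hρ.comp haf).sub contDiff_const).div_const _

lemma contDiff_gIter {k : ℕ} {φ : ℝ → ℝ} (hφ : ContDiff ℝ (k : ℕ) φ) (n : ℕ) :
    ContDiff ℝ (k : ℕ) (gIter φ n) := by
  induction n with
  | zero => exact contDiff_id
  | succ n ih => exact hφ.comp ih

lemma hasDerivAt_gIter (hρ : Differentiable ℝ ρ) (hδ : δ ≠ 0) (n : ℕ) (y : ℝ) :
    HasDerivAt (gIter (phiF ρ x₀ δ c) n) (GdIter (phiF ρ x₀ δ c) (phiDF ρ x₀ δ c) n y) y := by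
  induction n with
  | zero => simpa [gIter, GdIter] using hasDerivAt_id y
  | succ n ih =>
    exact (hasDerivAt_phiF (x₀ := x₀) (c := c) hρ hδ (gIter (phiF ρ x₀ δ c) n y)).comp y ih

lemma hasDerivAt_GdIter (hρ : ContDiff ℝ 2 ρ) (hδ : δ ≠ 0) (n : ℕ) (y : ℝ) :
    HasDerivAt (GdIter (phiF ρ x₀ δ c) (phiDF ρ x₀ δ c) n)
      (GddIter (phiF ρ x₀ δ c) (phiDF ρ x₀ δ c) (phiDDF ρ x₀ δ c) n y) y := by
  have hρ1 : Differentiable ℝ ρ := hρ.differentiable (by norm_num)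
  induction n with
  | zero => simpa [GdIter, GddIter] using hasDerivAt_const y (1:ℝ)
  | succ n ih =>
    have h1 : HasDerivAt (fun y => phiDF ρ x₀ δ c (gIter (phiF ρ x₀ δ c) n y))
        (phiDDF ρ x₀ δ c (gIter (phiF ρ x₀ δ c) n y)
          * GdIter (phiF ρ x₀ δ c) (phiDF ρ x₀ δ c) n y) y :=
      (hasDerivAt_phiDF hρ hδ _).comp y (hasDerivAt_gIter hρ1 hδ n y)
    have h2 := h1.mul ih
    exact h2

/-- MVT estimate for `deriv ρ` near `x₀`. -/
lemma mvt1 {U : Set ℝ} {r M : ℝ} (hUopen : IsOpen U)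
    (hρ3 : ContDiffOn ℝ (3 : ℕ) ρ U) (hball : closedBall x₀ r ⊆ U)
    (hM : ∀ t ∈ closedBall x₀ r, |deriv (deriv ρ) t| ≤ M)
    {t : ℝ} (ht : |t| ≤ r) :
    |deriv ρ (x₀ + t) - deriv ρ x₀| ≤ M * |t| := by
  have hd1 : ContDiffOn ℝ (2 : ℕ) (deriv ρ) U :=
    hρ3.deriv_of_isOpen hUopen (by norm_num)
  have hmem : ∀ s : ℝ, s ∈ Icc (-|t|) |t| → x₀ + s ∈ closedBall x₀ r := by
    intro s hs
    simp only [mem_closedBall, Real.dist_eq, add_sub_cancel_left]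
    rw [abs_le]; constructor <;> [linarith [hs.1, abs_nonneg t]; linarith [hs.2]]
  have hderiv : ∀ s ∈ Icc (-|t|) |t|,
      HasDerivWithinAt (fun s => deriv ρ (x₀ + s)) (deriv (deriv ρ) (x₀ + s)) (Icc (-|t|) |t|) s := by
    intro s hs
    have hsU : x₀ + s ∈ U := hball (hmem s hs)
    have hdAt : DifferentiableAt ℝ (deriv ρ) (x₀ + s) := by
      have := (hd1.differentiableOn (by norm_num)).differentiableAt (hUopen.mem_nhds hsU)
      exact this
    have h1 : HasDerivAt (fun s : ℝ => deriv ρ (x₀ + s)) (deriv (deriv ρ) (x₀ + s) * 1) s :=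
      hdAt.hasDerivAt.comp s (by simpa using (hasDerivAt_id s).const_add x₀)
    simpa using h1.hasDerivWithinAt
  have hbound : ∀ s ∈ Icc (-|t|) |t|, ‖deriv (deriv ρ) (x₀ + s)‖ ≤ M := by
    intro s hs
    exact hM _ (hmem s hs)
  have := (convex_Icc (-|t|) |t|).norm_image_sub_le_of_norm_hasDerivWithin_le
    hderiv hbound (by constructor <;> simp [abs_nonneg] : (0:ℝ) ∈ Icc (-|t|) |t|)
    (by constructor <;> [exact neg_abs_le t; exact le_abs_self t] : t ∈ Icc (-|t|) |t|)
  simpa [Real.norm_eq_abs] using this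

/-- MVT estimate for `ρ` itself: Taylor order 1. -/
lemma mvt0 {U : Set ℝ} {r M : ℝ} (hUopen : IsOpen U)
    (hρ3 : ContDiffOn ℝ (3 : ℕ) ρ U) (hball : closedBall x₀ r ⊆ U)
    (hM : ∀ t ∈ closedBall x₀ r, |deriv (deriv ρ) t| ≤ M) (hM0 : 0 ≤ M)
    {t : ℝ} (ht : |t| ≤ r) :
    |ρ (x₀ + t) - ρ x₀ - deriv ρ x₀ * t| ≤ M * t ^ 2 := by
  set c := deriv ρ x₀
  have hmem : ∀ s : ℝ, s ∈ Icc (-|t|) |t| → x₀ + s ∈ closedBall x₀ r := by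
    intro s hs
    simp only [mem_closedBall, Real.dist_eq, add_sub_cancel_left]
    rw [abs_le]; constructor <;> [linarith [hs.1, abs_nonneg t]; linarith [hs.2]]
  have hderiv : ∀ s ∈ Icc (-|t|) |t|,
      HasDerivWithinAt (fun s => ρ (x₀ + s) - c * s) (deriv ρ (x₀ + s) - c) (Icc (-|t|) |t|) s := by
    intro s hs
    have hsU : x₀ + s ∈ U := hball (hmem s hs)
    have hdAt : DifferentiableAt ℝ ρ (x₀ + s) :=
      (hρ3.differentiableOn (by norm_num)).differentiableAt (hUopen.mem_nhds hsU)
    have h1 : HasDerivAt (fun s : ℝ => ρ (x₀ + s)) (deriv ρ (x₀ + s) * 1) s :=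
      hdAt.hasDerivAt.comp s (by simpa using (hasDerivAt_id s).const_add x₀)
    have h2 : HasDerivAt (fun s : ℝ => ρ (x₀ + s) - c * s) (deriv ρ (x₀ + s) * 1 - c) s := by
      exact (h1.sub ((hasDerivAt_id' s).const_mul c)).congr_deriv (by ring)
    simpa using h2.hasDerivWithinAt
  have hbound : ∀ s ∈ Icc (-|t|) |t|, ‖deriv ρ (x₀ + s) - c‖ ≤ M * |t| := by
    intro s hs
    have hst : |s| ≤ r := by
      rw [abs_le]; constructor <;> [linarith [hs.1, ht]; linarith [hs.2, ht]]
    have := mvt1 hUopen hρ3 hball hM hst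
    have hstt : |s| ≤ |t| := abs_le.mpr ⟨hs.1, hs.2⟩
    calc ‖deriv ρ (x₀ + s) - c‖ = |deriv ρ (x₀ + s) - c| := rfl
      _ ≤ M * |s| := this
      _ ≤ M * |t| := by nlinarith [abs_nonneg s]
  have : ‖ρ (x₀ + t) - c * t - (ρ (x₀ + 0) - c * 0)‖ ≤ M * |t| * ‖t - 0‖ := by
    have h := (convex_Icc (-|t|) |t|).norm_image_sub_le_of_norm_hasDerivWithin_le
      hderiv hbound (by constructor <;> simp [abs_nonneg] : (0:ℝ) ∈ Icc (-|t|) |t|)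
      (by constructor <;> [exact neg_abs_le t; exact le_abs_self t] : t ∈ Icc (-|t|) |t|)
    simpa using h
  rw [Real.norm_eq_abs] at this
  simp only [add_zero, mul_zero, sub_zero, Real.norm_eq_abs] at this
  calc |ρ (x₀ + t) - ρ x₀ - c * t| = |ρ (x₀ + t) - c * t - ρ x₀| := by ring_nf
    _ ≤ M * |t| * |t| := this
    _ = M * t ^ 2 := by rw [mul_assoc, abs_mul_abs_self, ← pow_two]

end PhiAux

noncomputable section IdNet

/-- weight used in layer `ℓ` of the identity network. -/
def idW (L : ℕ) (δ c : ℝ) (ℓ : ℕ) : ℝ :=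
  if ℓ = 0 then δ else if ℓ + 1 = L then 1 / (δ * c) else 1 / c

def idB (L : ℕ) (δ c x₀ p : ℝ) (ℓ : ℕ) : ℝ :=
  if ℓ = 0 then x₀ else if ℓ + 1 = L then -p / (δ * c) else x₀ - p / c

def idNet (d L : ℕ) (δ c x₀ p : ℝ) : NeuralNetwork d where
  depth := L - 1
  dims := fun _ => d
  dims0 := rfl
  A := fun ℓ => Matrix.diagonal (fun _ => idW L δ c ℓ)
  b := fun ℓ _ => idB L δ c x₀ p ℓ

variable {ρ : ℝ → ℝ} {x₀ δ c : ℝ} {d L : ℕ}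

lemma idNet_mulVec {p : ℝ} (ℓ : ℕ) (v : Fin d → ℝ) (i : Fin d) :
    Matrix.mulVec ((idNet d L δ c x₀ p).A ℓ) v i = idW L δ c ℓ * v i :=
  Matrix.mulVec_diagonal _ _ _

lemma idNet_hidden (hδ : δ ≠ 0) (hc : c ≠ 0) (hL : 2 ≤ L)
    (x : Fin d → ℝ) (ℓ : ℕ) (hℓ1 : 1 ≤ ℓ) (hℓ : ℓ ≤ L - 1) (i : Fin d) :
    (idNet d L δ c x₀ (ρ x₀)).hidden ρ x ℓ i
      = ρ (x₀ + δ * gIter (phiF ρ x₀ δ c) (ℓ - 1) (x i)) := by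
  induction ℓ with
  | zero => omega
  | succ ℓ ih =>
    rcases Nat.eq_zero_or_pos ℓ with h0 | hpos
    · subst h0
      have hA : (idNet d L δ c x₀ (ρ x₀)).A 0 = Matrix.diagonal (fun _ => idW L δ c 0) := rfl
      show ρ (Matrix.mulVec ((idNet d L δ c x₀ (ρ x₀)).A 0) _ i + _) = _
      erw [idNet_mulVec]
      show ρ (idW L δ c 0 * (idNet d L δ c x₀ (ρ x₀)).hidden ρ x 0 i + idB L δ c x₀ (ρ x₀) 0) = _
      simp only [idW, idB, if_pos rfl]
      have : (idNet d L δ c x₀ (ρ x₀)).hidden ρ x 0 i = x i := rfl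
      rw [this]
      simp [gIter]
      ring_nf
    · have hℓ' : ℓ ≤ L - 1 := by omega
      have hne0 : ℓ ≠ 0 := by omega
      have hneL : ℓ + 1 ≠ L := by omega
      have hA : (idNet d L δ c x₀ (ρ x₀)).A ℓ = Matrix.diagonal (fun _ => idW L δ c ℓ) := rfl
      show ρ (Matrix.mulVec ((idNet d L δ c x₀ (ρ x₀)).A ℓ) _ i + _) = _
      erw [idNet_mulVec]
      show ρ (idW L δ c ℓ * (idNet d L δ c x₀ (ρ x₀)).hidden ρ x ℓ i + idB L δ c x₀ (ρ x₀) ℓ) = _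
      rw [ih hpos hℓ']
      simp only [idW, idB, if_neg hne0, if_neg hneL]
      have hstep : gIter (phiF ρ x₀ δ c) (ℓ + 1 - 1) (x i)
          = phiF ρ x₀ δ c (gIter (phiF ρ x₀ δ c) (ℓ - 1) (x i)) := by
        have : ℓ + 1 - 1 = (ℓ - 1) + 1 := by omega
        rw [this]
        rfl
      rw [hstep]
      unfold phiF
      congr 1
      field_simp
      ring

lemma idNet_realize (hδ : δ ≠ 0) (hc : c ≠ 0) (hL : 2 ≤ L)
    (x : Fin d → ℝ) (i : Fin d) :
    (idNet d L δ c x₀ (ρ x₀)).realize ρ x i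
      = gIter (phiF ρ x₀ δ c) (L - 1) (x i) := by
  have hdepth : (idNet d L δ c x₀ (ρ x₀)).depth = L - 1 := rfl
  have hA : (idNet d L δ c x₀ (ρ x₀)).A (L-1) = Matrix.diagonal (fun _ => idW L δ c (L-1)) := rfl
  show Matrix.mulVec ((idNet d L δ c x₀ (ρ x₀)).A (L-1)) _ i + _ = _
  erw [idNet_mulVec]
  show idW L δ c (L-1) * (idNet d L δ c x₀ (ρ x₀)).hidden ρ x (L-1) i
      + idB L δ c x₀ (ρ x₀) (L-1) = _
  rw [idNet_hidden hδ hc hL x (L-1) (by omega) le_rfl i]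
  have h1 : L - 1 ≠ 0 := by omega
  have h2 : L - 1 + 1 = L := by omega
  simp only [idW, idB, if_neg h1, if_pos h2]
  have hstep : gIter (phiF ρ x₀ δ c) (L - 1) (x i)
      = phiF ρ x₀ δ c (gIter (phiF ρ x₀ δ c) (L - 1 - 1) (x i)) := by
    have : L - 1 = (L - 1 - 1) + 1 := by omega
    rw [this]
    rfl
  rw [hstep]
  unfold phiF
  field_simp
  ring

lemma idNet_numWeights (hL : 2 ≤ L) :
    (idNet d L δ c x₀ (ρ x₀)).numWeights ≤ 4 * d * L - 3 * d := by
  have hdepth : (idNet d L δ c x₀ (ρ x₀)).depth = L - 1 := rfl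
  have hle : (idNet d L δ c x₀ (ρ x₀)).numWeights ≤ 2 * d * L := by
    unfold NeuralNetwork.numWeights
    calc ∑ ℓ ∈ Finset.range ((idNet d L δ c x₀ (ρ x₀)).depth + 1), _
        ≤ ∑ ℓ ∈ Finset.range ((idNet d L δ c x₀ (ρ x₀)).depth + 1), (d + d) := by
          apply Finset.sum_le_sum
          intro ℓ _
          have hA : (Finset.univ.filter fun p : Fin d × Fin d =>
              (idNet d L δ c x₀ (ρ x₀)).A ℓ p.1 p.2 ≠ 0).card ≤ d := by
            have hsub : (Finset.univ.filter fun p : Fin d × Fin d =>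
                (idNet d L δ c x₀ (ρ x₀)).A ℓ p.1 p.2 ≠ 0)
                ⊆ Finset.univ.filter fun p : Fin d × Fin d => p.1 = p.2 := by
              intro p hp
              simp only [Finset.mem_filter, Finset.mem_univ, true_and] at hp ⊢
              by_contra hne
              apply hp
              show Matrix.diagonal _ p.1 p.2 = 0
              rw [Matrix.diagonal_apply_ne _ hne]
            refine le_trans (Finset.card_le_card hsub) ?_
            have : (Finset.univ.filter fun p : Fin d × Fin d => p.1 = p.2).card
                ≤ (Finset.univ : Finset (Fin d)).card := by
              apply Finset.card_le_card_of_injOn (fun p => p.1)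
              · intro p _; exact Finset.mem_univ _
              · intro p hp q hq hpq
                simp only [Finset.coe_filter, Set.mem_setOf_eq] at hp hq
                have h1 : p.1 = q.1 := hpq
                have h2 : p.2 = q.2 := by rw [← hp.2, ← hq.2]; exact h1
                exact Prod.ext h1 h2
            simpa using this
          have hb : (Finset.univ.filter fun i : Fin ((idNet d L δ c x₀ (ρ x₀)).dims (ℓ + 1)) =>
              (idNet d L δ c x₀ (ρ x₀)).b ℓ i ≠ 0).card ≤ d := by
            refine le_trans (Finset.card_filter_le _ _) (le_of_eq ?_)
            exact Finset.card_fin _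
          exact Nat.add_le_add hA hb
      _ = (L - 1 + 1) * (d + d) := by rw [Finset.sum_const, Finset.card_range]; rfl
      _ = 2 * d * L := by
          have : L - 1 + 1 = L := by omega
          rw [this]; ring
  have : 2 * d * L + 3 * d ≤ 4 * d * L := by nlinarith
  omega

end IdNet


set_option maxHeartbeats 3000000 in
theorem approximate_identity
    (k : ℕ) (hk : k ≤ 2) (ρ : ℝ → ℝ) (hρk : ContDiff ℝ (k : ℕ) ρ)
    (x₀ : ℝ) (U : Set ℝ) (hUopen : IsOpen U) (hU : x₀ ∈ U)
    (hρ3 : ContDiffOn ℝ (3 : ℕ) ρ U) (hρ' : deriv ρ x₀ ≠ 0) :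
    ∀ B : ℝ, 0 < B → ∀ d : ℕ, 0 < d → ∃ C : ℝ, 0 < C ∧
      ∀ L : ℕ, 2 ≤ L → ∀ ε : ℝ, 0 < ε → ε < 1 →
        ∃ (Φ : NeuralNetwork d) (hout : Φ.dims (Φ.depth + 1) = d),
          Φ.depth + 1 = L ∧
          Φ.numWeights ≤ 4 * d * L - 3 * d ∧
          Φ.maxWeight ≤ C * L * ε⁻¹ ∧
          (∀ i : Fin d, ∀ u : List (Fin d), u.length ≤ k →
            ∀ x : Fin d → ℝ, (∀ l, x l ∈ Set.Icc (-B) B) →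
              |multiDeriv u (fun y => Φ.realize ρ y (Fin.cast hout.symm i) - y i) x| ≤ ε) ∧
          (∀ i : Fin d, ∀ u : List (Fin d), u.length ≤ k →
            ∀ x : Fin d → ℝ, (∀ l, x l ∈ Set.Icc (-B) B) →
              |multiDeriv u (fun y => Φ.realize ρ y (Fin.cast hout.symm i)) x| ≤
                C * max 1 B) := by
  intro B hB d hd
  classical
  obtain ⟨c, hcdef⟩ : ∃ c : ℝ, c = deriv ρ x₀ := ⟨_, rfl⟩
  have hc0 : c ≠ 0 := hcdef ▸ hρ'
  have hcpos : 0 < |c| := abs_pos.mpr hc0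
  obtain ⟨r, hr0, hrU⟩ : ∃ r > 0, Metric.closedBall x₀ r ⊆ U := by
    obtain ⟨r, hr0, hrU⟩ := Metric.nhds_basis_closedBall.mem_iff.mp (hUopen.mem_nhds hU)
    exact ⟨r, hr0, hrU⟩
  have hdd2 : ContDiffOn ℝ (1 : ℕ) (deriv (deriv ρ)) U := by
    have h1 : ContDiffOn ℝ (2 : ℕ) (deriv ρ) U := hρ3.deriv_of_isOpen hUopen (by norm_num)
    exact h1.deriv_of_isOpen hUopen (by norm_num)
  obtain ⟨M0, hM0⟩ := (isCompact_closedBall x₀ r).exists_bound_of_continuousOn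
    ((hdd2.continuousOn).mono hrU)
  obtain ⟨M, hMdef⟩ : ∃ M : ℝ, M = max M0 0 := ⟨_, rfl⟩
  have hM : ∀ t ∈ Metric.closedBall x₀ r, |deriv (deriv ρ) t| ≤ M := fun t ht =>
    le_trans (hM0 t ht) (hMdef ▸ le_max_left _ _)
  have hMnn : (0:ℝ) ≤ M := hMdef ▸ le_max_right _ _
  obtain ⟨K, hKdef⟩ : ∃ K : ℝ, K = (M + 1) * (B + 1)^2 / |c| + 1 := ⟨_, rfl⟩
  have hK1 : (1:ℝ) ≤ K := by
    rw [hKdef]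
    have : (0:ℝ) ≤ (M + 1) * (B + 1)^2 / |c| := by positivity
    linarith
  have hKpos : (0:ℝ) < K := lt_of_lt_of_le one_pos hK1
  obtain ⟨D, hDdef⟩ : ∃ D : ℝ, D = 30 * K + (B + 1) / r + 1 := ⟨_, rfl⟩
  have hD30 : 30 * K ≤ D := by
    rw [hDdef]
    have : (0:ℝ) ≤ (B + 1) / r := by positivity
    linarith
  have hDpos : (0:ℝ) < D := by
    rw [hDdef]; positivity
  obtain ⟨Cf, hCfdef⟩ : ∃ Cf : ℝ,
      Cf = D * (1 + |ρ x₀|) / |c| + |x₀| + 1 / |c| + |x₀ - ρ x₀ / c| + D + 2 := ⟨_, rfl⟩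
  have hCf2 : (2:ℝ) ≤ Cf := by
    rw [hCfdef]
    have hD0 : (0:ℝ) < D := by positivity
    have h1 : (0:ℝ) ≤ D * (1 + |ρ x₀|) / |c| := by positivity
    have h2 : (0:ℝ) ≤ |x₀| := abs_nonneg _
    have h3 : (0:ℝ) ≤ 1 / |c| := by positivity
    have h4 : (0:ℝ) ≤ |x₀ - ρ x₀ / c| := abs_nonneg _
    linarith
  have hCfpos : (0:ℝ) < Cf := by linarith
  refine ⟨Cf, hCfpos, ?_⟩
  intro L hL ε hε0 hε1
  have hLpos : (0:ℝ) < L := by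
    have : 0 < L := by omega
    exact_mod_cast this
  have hL2 : (2:ℝ) ≤ (L:ℝ) := by exact_mod_cast hL
  obtain ⟨δ, hδdef⟩ : ∃ δ : ℝ, δ = ε / (D * L) := ⟨_, rfl⟩
  have hδpos : (0:ℝ) < δ := by rw [hδdef]; positivity
  have hδne : δ ≠ 0 := ne_of_gt hδpos
  obtain ⟨N, hNdef⟩ : ∃ N : ℕ, N = L - 1 := ⟨_, rfl⟩
  -- smallness facts
  have hδK : (0:ℝ) ≤ δ * K := by positivity
  have hNL : ((N:ℝ)) ≤ (L:ℝ) := by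
    rw [hNdef]; exact_mod_cast Nat.sub_le L 1
  have hLsK : (L:ℝ) * (δ * K) = ε * K / D := by
    rw [hδdef]; field_simp
  have hNs30e : (N : ℝ) * (δ * K) ≤ ε / 30 := by
    have h1 : (N : ℝ) * (δ * K) ≤ (L:ℝ) * (δ * K) :=
      mul_le_mul_of_nonneg_right hNL hδK
    have h2 : ε * K / D ≤ ε / 30 := by
      rw [div_le_div_iff₀ hDpos (by norm_num)]
      nlinarith
    linarith [hLsK ▸ h1]
  have hNs30 : (N : ℝ) * (δ * K) ≤ 1/30 := by linarith
  have hNs1 : (N : ℝ) * (δ * K) ≤ 1 := by linarith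
  have hδr : δ * (B + 1) ≤ r := by
    rw [hδdef, div_mul_eq_mul_div, div_le_iff₀ (by positivity)]
    have hrD : B + 1 ≤ r * D := by
      rw [hDdef]
      have hfr : r * ((B+1)/r) = B + 1 := by field_simp
      nlinarith [mul_pos hr0 hKpos]
    have hL1 : (1:ℝ) ≤ (L:ℝ) := by linarith
    have hεB : ε * (B + 1) ≤ B + 1 := by nlinarith
    nlinarith [mul_nonneg (by linarith : (0:ℝ) ≤ (L:ℝ) - 1)
      (le_of_lt (mul_pos hr0 hDpos))]
  have hδ1 : δ ≤ 1 := by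
    rw [hδdef, div_le_one (by positivity)]
    nlinarith [mul_nonneg (le_of_lt hDpos) (by linarith : (0:ℝ) ≤ (L:ℝ) - 2)]
  -- the three φ estimates
  have hball_mem : ∀ z : ℝ, |z| ≤ B + 1 → |δ * z| ≤ r := by
    intro z hz
    rw [abs_mul, abs_of_pos hδpos]
    calc δ * |z| ≤ δ * (B + 1) := by nlinarith
      _ ≤ r := hδr
  have hphi : ∀ z : ℝ, |z| ≤ B + 1 → |phiF ρ x₀ δ c z - z| ≤ δ * K := by
    intro z hz
    have htr := hball_mem z hz
    have hnum := mvt0 hUopen hρ3 hrU hM hMnn htr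
    rw [← hcdef] at hnum
    have heq : phiF ρ x₀ δ c z - z = (ρ (x₀ + δ*z) - ρ x₀ - c * (δ*z)) / (δ*c) := by
      unfold phiF; field_simp
    rw [heq, abs_div, abs_mul, abs_of_pos hδpos, div_le_iff₀ (by positivity)]
    have hz2 : z^2 ≤ (B+1)^2 := by
      rw [← sq_abs z]
      exact pow_le_pow_left₀ (abs_nonneg z) hz 2
    have hKc : M * (B+1)^2 ≤ K * |c| := by
      rw [hKdef]
      have : ((M + 1) * (B + 1)^2 / |c| + 1) * |c| = (M+1)*(B+1)^2 + |c| := by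
        field_simp
      rw [this]
      nlinarith [hcpos, sq_nonneg (B+1)]
    calc |ρ (x₀ + δ*z) - ρ x₀ - c * (δ*z)| ≤ M * (δ*z)^2 := hnum
      _ = M * z^2 * δ * δ := by ring
      _ ≤ δ * K * (δ * |c|) := by
          have h1 : M * z^2 ≤ K * |c| :=
            le_trans (mul_le_mul_of_nonneg_left hz2 hMnn) hKc
          nlinarith [mul_le_mul_of_nonneg_left h1 (le_of_lt (mul_pos hδpos hδpos))]
  have hphid : ∀ z : ℝ, |z| ≤ B + 1 → |phiDF ρ x₀ δ c z - 1| ≤ δ * K := by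
    intro z hz
    have htr := hball_mem z hz
    have hnum := mvt1 hUopen hρ3 hrU hM htr
    rw [← hcdef] at hnum
    have heq : phiDF ρ x₀ δ c z - 1 = (deriv ρ (x₀ + δ*z) - c) / c := by
      unfold phiDF; field_simp
    rw [heq, abs_div, div_le_iff₀ hcpos]
    have hKc : M * (B+1) ≤ K * |c| := by
      rw [hKdef]
      have : ((M + 1) * (B + 1)^2 / |c| + 1) * |c| = (M+1)*(B+1)^2 + |c| := by
        field_simp
      rw [this]
      nlinarith [hcpos, mul_nonneg (mul_nonneg hMnn (by linarith : (0:ℝ) ≤ B + 1)) hB.le]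
    have habsz : |δ * z| = δ * |z| := by rw [abs_mul, abs_of_pos hδpos]
    calc |deriv ρ (x₀ + δ*z) - c| ≤ M * |δ * z| := hnum
      _ = M * |z| * δ := by rw [habsz]; ring
      _ ≤ δ * K * |c| := by
          have h1 : M * |z| ≤ K * |c| :=
            le_trans (mul_le_mul_of_nonneg_left hz hMnn) hKc
          nlinarith [mul_le_mul_of_nonneg_left h1 (le_of_lt hδpos)]
  have hphidd : ∀ z : ℝ, |z| ≤ B + 1 → |phiDDF ρ x₀ δ c z| ≤ δ * K := by
    intro z hz
    have htr := hball_mem z hz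
    have hmem : x₀ + δ * z ∈ Metric.closedBall x₀ r := by
      simp only [Metric.mem_closedBall, Real.dist_eq, add_sub_cancel_left]
      exact htr
    have hnum := hM _ hmem
    have heq : |phiDDF ρ x₀ δ c z| = δ * |deriv (deriv ρ) (x₀ + δ*z)| / |c| := by
      unfold phiDDF
      rw [abs_div, abs_mul, abs_of_pos hδpos]
    rw [heq, div_le_iff₀ hcpos]
    have hKc : M ≤ K * |c| := by
      rw [hKdef]
      have : ((M + 1) * (B + 1)^2 / |c| + 1) * |c| = (M+1)*(B+1)^2 + |c| := by
        field_simp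
      rw [this]
      have h1B : (1:ℝ) ≤ (B+1)^2 := by nlinarith
      have h2 : M * 1 ≤ M * (B+1)^2 := mul_le_mul_of_nonneg_left h1B hMnn
      nlinarith [sq_nonneg (B+1)]
    have h1 : δ * |deriv (deriv ρ) (x₀ + δ*z)| ≤ δ * (K * |c|) :=
      mul_le_mul_of_nonneg_left (le_trans hnum hKc) (le_of_lt hδpos)
    calc δ * |deriv (deriv ρ) (x₀ + δ*z)| ≤ δ * (K * |c|) := h1
      _ = δ * K * |c| := by ring
  -- construct the network
  refine ⟨idNet d L δ c x₀ (ρ x₀), rfl, by show L - 1 + 1 = L; omega,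
    idNet_numWeights hL, ?_, ?_, ?_⟩
  · -- maxWeight bound
    have hLε1 : (1:ℝ) ≤ (L:ℝ) * ε⁻¹ := by
      have hεinv : (1:ℝ) ≤ ε⁻¹ := by
        rw [le_inv_comm₀ one_pos hε0]
        simpa using hε1.le
      nlinarith
    have hconst : ∀ w : ℝ, w ≤ Cf → w ≤ Cf * L * ε⁻¹ := by
      intro w hw
      calc w ≤ Cf := hw
        _ = Cf * 1 := (mul_one Cf).symm
        _ ≤ Cf * ((L:ℝ) * ε⁻¹) := mul_le_mul_of_nonneg_left hLε1 (le_of_lt hCfpos)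
        _ = Cf * L * ε⁻¹ := by ring
    have hfrac : ∀ a : ℝ, |a| * (D / |c|) ≤ Cf → |a / (δ * c)| ≤ Cf * L * ε⁻¹ := by
      intro a ha
      have heq : |a / (δ * c)| = (|a| * (D / |c|)) * ((L:ℝ) * ε⁻¹) := by
        rw [abs_div, abs_mul, abs_of_pos hδpos, hδdef]
        field_simp
      rw [heq]
      calc (|a| * (D / |c|)) * ((L:ℝ) * ε⁻¹) ≤ Cf * ((L:ℝ) * ε⁻¹) :=
            mul_le_mul_of_nonneg_right ha (by positivity)
        _ = Cf * L * ε⁻¹ := by ring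
    apply Real.sSup_le
    · rintro w ⟨ℓ, hℓ, hw | hw⟩
      · obtain ⟨i, j, hw⟩ := hw
        have hAij : (idNet d L δ c x₀ (ρ x₀)).A ℓ i j
            = Matrix.diagonal (fun _ => idW L δ c ℓ) i j := rfl
        rw [hw, hAij]
        by_cases hij : i = j
        · rw [hij]; erw [Matrix.diagonal_apply_eq]
          unfold idW
          split_ifs
          · rw [abs_of_pos hδpos]
            exact hconst δ (by linarith)
          · have : (1:ℝ) / (δ * c) = 1 / (δ * c) := rfl
            apply hfrac
            rw [abs_one, one_mul]
            calc D / |c| ≤ D * (1 + |ρ x₀|) / |c| := by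
                  apply (div_le_div_iff_of_pos_right hcpos).mpr
                  nlinarith [mul_nonneg (le_of_lt hDpos) (abs_nonneg (ρ x₀))]
              _ ≤ Cf := by
                  have h2 : (0:ℝ) ≤ |x₀| := abs_nonneg _
                  have h3 : (0:ℝ) ≤ 1 / |c| := by positivity
                  have h4 : (0:ℝ) ≤ |x₀ - ρ x₀ / c| := abs_nonneg _
                  linarith
          · apply hconst
            rw [abs_div, abs_one]
            have h3 : 1 / |c| ≤ Cf := by
              have h1 : (0:ℝ) ≤ D * (1 + |ρ x₀|) / |c| := by positivity
              have h2 : (0:ℝ) ≤ |x₀| := abs_nonneg _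
              have h4 : (0:ℝ) ≤ |x₀ - ρ x₀ / c| := abs_nonneg _
              linarith
            exact h3
        · rw [Matrix.diagonal_apply_ne _ hij, abs_zero]
          positivity
      · obtain ⟨i, hw⟩ := hw
        have hbi : (idNet d L δ c x₀ (ρ x₀)).b ℓ i = idB L δ c x₀ (ρ x₀) ℓ := rfl
        rw [hw, hbi]
        unfold idB
        split_ifs
        · apply hconst
          have h1 : (0:ℝ) ≤ D * (1 + |ρ x₀|) / |c| := by positivity
          have h3 : (0:ℝ) ≤ 1 / |c| := by positivity
          have h4 : (0:ℝ) ≤ |x₀ - ρ x₀ / c| := abs_nonneg _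
          linarith
        · apply hfrac
          rw [abs_neg]
          calc |ρ x₀| * (D / |c|) = D * |ρ x₀| / |c| := by ring
            _ ≤ D * (1 + |ρ x₀|) / |c| := by
                apply (div_le_div_iff_of_pos_right hcpos).mpr
                nlinarith [hDpos]
            _ ≤ Cf := by
                have h2 : (0:ℝ) ≤ |x₀| := abs_nonneg _
                have h3 : (0:ℝ) ≤ 1 / |c| := by positivity
                have h4 : (0:ℝ) ≤ |x₀ - ρ x₀ / c| := abs_nonneg _
                linarith
        · apply hconst
          have h1 : (0:ℝ) ≤ D * (1 + |ρ x₀|) / |c| := by positivity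
          have h3 : (0:ℝ) ≤ 1 / |c| := by positivity
          have h2 : (0:ℝ) ≤ |x₀| := abs_nonneg _
          linarith
    · positivity
  · -- the approximation bound
    intro i u hu x hx
    have hxB : |x i| ≤ B := by
      have := hx i
      exact abs_le.mpr ⟨this.1, this.2⟩
    have hfun1 : (fun y : Fin d → ℝ =>
        (idNet d L δ c x₀ (ρ x₀)).realize ρ y (Fin.cast rfl i) - y i)
        = fun y : Fin d → ℝ =>
          (fun t => gIter (phiF ρ x₀ δ c) N t - t) (y i) := by
      funext y
      erw [idNet_realize hδne hc0 hL y (Fin.cast rfl i), hNdef]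
      exact rfl
    erw [hfun1]
    have hHc : ContDiff ℝ (k : ℕ) (fun t => gIter (phiF ρ x₀ δ c) N t - t) :=
      (contDiff_gIter (contDiff_phiF hρk) N).sub contDiff_id
    rw [multiDeriv_comp_eval _ hHc i u hu]
    beta_reduce
    split_ifs with hcond
    · obtain hm | hm | hm : u.length = 0 ∨ u.length = 1 ∨ u.length = 2 := by omega
      · rw [hm, iteratedDeriv_zero]
        have := gIter_bound0 hB.le hδK hNs1 hphi N le_rfl (x i) hxB
        calc |gIter (phiF ρ x₀ δ c) N (x i) - x i| ≤ (N:ℝ) * (δ * K) := this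
          _ ≤ ε / 30 := hNs30e
          _ ≤ ε := by linarith
      · rw [hm, iteratedDeriv_one]
        rw [hm] at hu
        have hρ1 : Differentiable ℝ ρ :=
          (hρk.of_le (by exact_mod_cast hu : (1 : WithTop ℕ∞) ≤ (k : ℕ))).differentiable one_ne_zero
        have hder : deriv (fun t => gIter (phiF ρ x₀ δ c) N t - t) (x i)
            = GdIter (phiF ρ x₀ δ c) (phiDF ρ x₀ δ c) N (x i) - 1 :=
          ((hasDerivAt_gIter (x₀ := x₀) (c := c) hρ1 hδne N (x i)).sub
            (hasDerivAt_id (x i))).deriv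
        rw [hder]
        have := GdIter_bound hB.le hδK hNs30 hphi hphid N le_rfl (x i) hxB
        calc |GdIter (phiF ρ x₀ δ c) (phiDF ρ x₀ δ c) N (x i) - 1|
            ≤ 3 * (N:ℝ) * (δ * K) := this
          _ ≤ 3 * (ε / 30) := by nlinarith
          _ ≤ ε := by linarith
      · rw [hm] at hu
        have hk2 : k = 2 := le_antisymm hk hu
        have hρ2 : ContDiff ℝ (2 : ℕ) ρ := by rw [hk2] at hρk; exact_mod_cast hρk
        have hρ1 : Differentiable ℝ ρ := hρ2.differentiable (by norm_num)
        rw [hm, iteratedDeriv_succ, iteratedDeriv_one]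
        have hderivH : deriv (fun t => gIter (phiF ρ x₀ δ c) N t - t)
            = fun t => GdIter (phiF ρ x₀ δ c) (phiDF ρ x₀ δ c) N t - 1 := by
          funext t
          exact ((hasDerivAt_gIter (x₀ := x₀) (c := c) hρ1 hδne N t).sub
            (hasDerivAt_id t)).deriv
        rw [hderivH]
        have hder2 : deriv (fun t => GdIter (phiF ρ x₀ δ c) (phiDF ρ x₀ δ c) N t - 1) (x i)
            = GddIter (phiF ρ x₀ δ c) (phiDF ρ x₀ δ c) (phiDDF ρ x₀ δ c) N (x i) :=
          ((hasDerivAt_GdIter (x₀ := x₀) (c := c) hρ2 hδne N (x i)).sub_const 1).deriv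
        rw [hder2]
        have := GddIter_bound hB.le hδK hNs30 hphi hphid hphidd N le_rfl (x i) hxB
        calc |GddIter (phiF ρ x₀ δ c) (phiDF ρ x₀ δ c) (phiDDF ρ x₀ δ c) N (x i)|
            ≤ 12 * (N:ℝ) * (δ * K) := this
          _ ≤ 12 * (ε / 30) := by nlinarith
          _ ≤ ε := by linarith
    · simpa using hε0.le
  · -- the W^{k,∞} bound
    intro i u hu x hx
    have hxB : |x i| ≤ B := by
      have := hx i
      exact abs_le.mpr ⟨this.1, this.2⟩
    have hmax1 : (1:ℝ) ≤ max 1 B := le_max_left _ _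
    have hmaxB : B ≤ max 1 B := le_max_right _ _
    have hfun1 : (fun y : Fin d → ℝ =>
        (idNet d L δ c x₀ (ρ x₀)).realize ρ y (Fin.cast rfl i))
        = fun y : Fin d → ℝ => (fun t => gIter (phiF ρ x₀ δ c) N t) (y i) := by
      funext y
      erw [idNet_realize hδne hc0 hL y (Fin.cast rfl i), hNdef]
      exact rfl
    erw [hfun1]
    have hHc : ContDiff ℝ (k : ℕ) (fun t => gIter (phiF ρ x₀ δ c) N t) :=
      contDiff_gIter (contDiff_phiF hρk) N
    rw [multiDeriv_comp_eval _ hHc i u hu]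
    beta_reduce
    have hCfmax : (2:ℝ) * max 1 B ≤ Cf * max 1 B := by nlinarith
    split_ifs with hcond
    · obtain hm | hm | hm : u.length = 0 ∨ u.length = 1 ∨ u.length = 2 := by omega
      · rw [hm, iteratedDeriv_zero]
        have := gIter_range hB.le hδK hNs1 hphi N le_rfl (x i) hxB
        calc |gIter (phiF ρ x₀ δ c) N (x i)| ≤ B + 1 := this
          _ ≤ 2 * max 1 B := by linarith
          _ ≤ Cf * max 1 B := hCfmax
      · rw [hm, iteratedDeriv_one]
        rw [hm] at hu
        have hρ1 : Differentiable ℝ ρ :=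
          (hρk.of_le (by exact_mod_cast hu : (1 : WithTop ℕ∞) ≤ (k : ℕ))).differentiable one_ne_zero
        have hder : deriv (fun t => gIter (phiF ρ x₀ δ c) N t) (x i)
            = GdIter (phiF ρ x₀ δ c) (phiDF ρ x₀ δ c) N (x i) :=
          (hasDerivAt_gIter (x₀ := x₀) (c := c) hρ1 hδne N (x i)).deriv
        rw [hder]
        have hb := GdIter_bound hB.le hδK hNs30 hphi hphid N le_rfl (x i) hxB
        have h3N : 3 * (N:ℝ) * (δ * K) ≤ 1 := by nlinarith
        calc |GdIter (phiF ρ x₀ δ c) (phiDF ρ x₀ δ c) N (x i)|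
            ≤ |GdIter (phiF ρ x₀ δ c) (phiDF ρ x₀ δ c) N (x i) - 1| + 1 := by
              have := abs_add_le (GdIter (phiF ρ x₀ δ c) (phiDF ρ x₀ δ c) N (x i) - 1) 1
              simpa using this
          _ ≤ 2 := by linarith
          _ ≤ 2 * max 1 B := by nlinarith
          _ ≤ Cf * max 1 B := hCfmax
      · rw [hm] at hu
        have hk2 : k = 2 := le_antisymm hk hu
        have hρ2 : ContDiff ℝ (2 : ℕ) ρ := by rw [hk2] at hρk; exact_mod_cast hρk
        have hρ1 : Differentiable ℝ ρ := hρ2.differentiable (by norm_num)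
        rw [hm, iteratedDeriv_succ, iteratedDeriv_one]
        have hderivH : deriv (fun t => gIter (phiF ρ x₀ δ c) N t)
            = fun t => GdIter (phiF ρ x₀ δ c) (phiDF ρ x₀ δ c) N t := by
          funext t
          exact (hasDerivAt_gIter (x₀ := x₀) (c := c) hρ1 hδne N t).deriv
        rw [hderivH]
        have hder2 : deriv (fun t => GdIter (phiF ρ x₀ δ c) (phiDF ρ x₀ δ c) N t) (x i)
            = GddIter (phiF ρ x₀ δ c) (phiDF ρ x₀ δ c) (phiDDF ρ x₀ δ c) N (x i) :=
          (hasDerivAt_GdIter (x₀ := x₀) (c := c) hρ2 hδne N (x i)).deriv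
        rw [hder2]
        have hb := GddIter_bound hB.le hδK hNs30 hphi hphid hphidd N le_rfl (x i) hxB
        have h12N : 12 * (N:ℝ) * (δ * K) ≤ 1 := by nlinarith
        calc |GddIter (phiF ρ x₀ δ c) (phiDF ρ x₀ δ c) (phiDDF ρ x₀ δ c) N (x i)|
            ≤ 1 := by linarith
          _ ≤ 2 * max 1 B := by nlinarith
          _ ≤ Cf * max 1 B := hCfmax
    · have : (0:ℝ) ≤ Cf * max 1 B := by positivity
      simpa using this
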